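/- Let Λ be a semiprime right Noetherian ring. Then every essential right ideal of Λ contains a regular element (Goldie's regular element lemma). -/

import Mathlib

/-- A submodule `L` of `M` is *essential* if it meets every nonzero submodule
nontrivially. -/
def EssentialSubmodule {R : Type*} [Ring R] {M : Type*} [AddCommGroup M] [Module R M]
    (L : Submodule R M) : Prop :=
  ∀ N : Submodule R M, N ≠ ⊥ → L ⊓ N ≠ ⊥

/-- An ideal is *two-sided* if it is also closed under multiplication on the right. -/
def IsTwoSided {R : Type*} [Ring R] (I : Ideal R) : Prop :=
  ∀ a ∈ I, ∀ b : R, a * b ∈ I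

/-- A two-sided ideal `P` is *prime* if it is proper and whenever `I * J ⊆ P` for
two-sided ideals `I`, `J`, one of `I`, `J` is contained in `P`. -/
def IsPrimeTwoSidedIdeal {R : Type*} [Ring R] (P : Ideal R) : Prop :=
  IsTwoSided P ∧ P ≠ ⊤ ∧ ∀ I J : Ideal R, IsTwoSided I → IsTwoSided J →
    (∀ a ∈ I, ∀ b ∈ J, a * b ∈ P) → I ≤ P ∨ J ≤ P

/-- A *regular element* is a nonzero element `a` with `a * b ≠ 0` and `b * a ≠ 0`
for every nonzero `b`. -/
def IsRegularElem {R : Type*} [Ring R] (a : R) : Prop :=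
  a ≠ 0 ∧ ∀ b : R, b ≠ 0 → a * b ≠ 0 ∧ b * a ≠ 0

section GoldieAux

variable {R : Type*} [Ring R]

/-- The left annihilator of an element, as a left ideal. -/
def lann (a : R) : Submodule R R where
  carrier := {x | x * a = 0}
  add_mem' := by
    intro x y hx hy
    simp only [Set.mem_setOf_eq] at *
    rw [add_mul, hx, hy, add_zero]
  zero_mem' := by simp
  smul_mem' := by
    intro r x hx
    simp only [smul_eq_mul, Set.mem_setOf_eq] at *
    rw [mul_assoc, hx, mul_zero]

lemma mem_lann {a x : R} : x ∈ lann a ↔ x * a = 0 := Iff.rfl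

lemma aux_pow (a r : R) : ∀ n : ℕ, (a * r) ^ n * a = a * (r * a) ^ n
  | 0 => by simp
  | n + 1 => by
    rw [pow_succ', mul_assoc, aux_pow a r n, pow_succ']
    simp [mul_assoc]

/-- Semiprimeness, element-wise: if `x R x = 0` then `x = 0`. -/
lemma semiprime_elem (hsp : sInf {P : Ideal R | IsPrimeTwoSidedIdeal P} = ⊥)
    {x : R} (hx : ∀ r, x * r * x = 0) : x = 0 := by
  by_contra hne
  have hxb : x ∉ (⊥ : Ideal R) := by simpa using hne
  rw [← hsp, Submodule.mem_sInf] at hxb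
  push_neg at hxb
  obtain ⟨P, hP, hxP⟩ := hxb
  set T : Ideal R := Submodule.span R {y | ∃ s, y = x * s} with hT
  have hxT : x ∈ T := Submodule.subset_span ⟨1, (mul_one x).symm⟩
  have hTts : IsTwoSided T := by
    intro a ha b
    induction ha using Submodule.span_induction with
    | mem y hy =>
      obtain ⟨s, rfl⟩ := hy
      exact Submodule.subset_span ⟨s * b, by rw [mul_assoc]⟩
    | zero => simpa using T.zero_mem
    | add u v hu hv ihu ihv => rw [add_mul]; exact T.add_mem ihu ihv
    | smul r u hu ihu =>
      rw [smul_eq_mul, mul_assoc]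
      exact T.smul_mem r ihu
  have claim1 : ∀ b ∈ T, ∀ s : R, x * s * b = 0 := by
    intro b hb
    induction hb using Submodule.span_induction with
    | mem y hy =>
      obtain ⟨s', rfl⟩ := hy
      intro s
      have : x * s * (x * s') = (x * s * x) * s' := by simp [mul_assoc]
      rw [this, hx s, zero_mul]
    | zero => intro s; rw [mul_zero]
    | add u v hu hv ihu ihv => intro s; rw [mul_add, ihu s, ihv s, add_zero]
    | smul r u hu ihu =>
      intro s
      rw [smul_eq_mul]
      have : x * s * (r * u) = x * (s * r) * u := by simp [mul_assoc]
      rw [this]; exact ihu (s * r)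
  have claim2 : ∀ a ∈ T, ∀ b ∈ T, a * b = 0 := by
    intro a ha
    induction ha using Submodule.span_induction with
    | mem y hy =>
      obtain ⟨s', rfl⟩ := hy
      intro b hb
      exact claim1 b hb s'
    | zero => intro b hb; rw [zero_mul]
    | add u v hu hv ihu ihv => intro b hb; rw [add_mul, ihu b hb, ihv b hb, add_zero]
    | smul r u hu ihu =>
      intro b hb
      rw [smul_eq_mul, mul_assoc, ihu b hb, mul_zero]
  obtain ⟨-, -, hprime⟩ := hP
  rcases hprime T T hTts hTts (fun a ha b hb => by rw [claim2 a ha b hb]; exact P.zero_mem) with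
    h | h
  · exact hxP (h hxT)
  · exact hxP (h hxT)

variable [IsNoetherianRing R]

/-- In a semiprime left Noetherian ring, every nonzero left ideal contains a
non-nilpotent element. -/
lemma exists_not_nilpotent (hsp : sInf {P : Ideal R | IsPrimeTwoSidedIdeal P} = ⊥)
    {K : Ideal R} (hK : K ≠ ⊥) : ∃ z ∈ K, ¬ IsNilpotent z := by
  by_contra hcon
  push_neg at hcon
  -- choose a ∈ K nonzero with maximal left annihilator
  obtain ⟨x₀, hx₀K, hx₀⟩ := (Submodule.ne_bot_iff K).mp hK
  obtain ⟨M, hMmem, hMmax⟩ := set_has_maximal_iff_noetherian.mpr inferInstance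
    ((fun y => lann y) '' {y | y ∈ K ∧ y ≠ 0}) ⟨lann x₀, ⟨x₀, ⟨hx₀K, hx₀⟩, rfl⟩⟩
  obtain ⟨a, ⟨haK, ha0⟩, rfl⟩ := hMmem
  -- claim: a * r * a = 0 for all r
  have key : ∀ r : R, a * r * a = 0 := by
    intro r
    by_contra hara
    have haraK : a * r * a ∈ K := by
      have := K.smul_mem (a * r) haK
      simpa [smul_eq_mul] using this
    have hle : lann a ≤ lann (a * r * a) := by
      intro t ht
      rw [mem_lann] at ht ⊢
      have : t * (a * r * a) = (t * a) * (r * a) := by simp [mul_assoc]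
      rw [this, ht, zero_mul]
    have heq : lann (a * r * a) = lann a := by
      by_contra hne
      exact hMmax (lann (a * r * a)) ⟨a * r * a, ⟨haraK, hara⟩, rfl⟩
        (lt_of_le_of_ne hle (fun h => hne h.symm))
    -- r * a is nilpotent
    have hraK : r * a ∈ K := by
      have := K.smul_mem r haK
      simpa [smul_eq_mul] using this
    obtain ⟨n, hn⟩ := hcon (r * a) hraK
    have hex : ∃ m, (a * r) ^ m * a = 0 := by
      refine ⟨n, ?_⟩
      rw [aux_pow, hn, mul_zero]
    classical
    let m := Nat.find hex
    have hm : (a * r) ^ m * a = 0 := Nat.find_spec hex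
    have hm0 : m ≠ 0 := by
      intro h
      apply ha0
      have h2 := hm
      rw [h, pow_zero, one_mul] at h2
      exact h2
    have hm1 : m ≠ 1 := by
      intro h
      apply hara
      have h2 := hm
      rw [h, pow_one] at h2
      exact h2
    obtain ⟨k, hk⟩ : ∃ k, m = k + 1 := ⟨m - 1, by omega⟩
    have ht0 : (a * r) ^ k * a ≠ 0 := Nat.find_min hex (by omega)
    have htmem : (a * r) ^ k ∈ lann (a * r * a) := by
      rw [mem_lann]
      have h2 : (a * r) ^ k * (a * r * a) = (a * r) ^ (k + 1) * a := by
        rw [pow_succ]; simp [mul_assoc]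
      rw [h2, ← hk]; exact hm
    rw [heq, mem_lann] at htmem
    exact ht0 htmem
  exact ha0 (semiprime_elem hsp key)

/-- Every nonzero left ideal contains a nonzero `z` with `lann z ⊓ Rz = ⊥`. -/
lemma exists_good (hsp : sInf {P : Ideal R | IsPrimeTwoSidedIdeal P} = ⊥)
    {K : Ideal R} (hK : K ≠ ⊥) :
    ∃ z ∈ K, z ≠ 0 ∧ lann z ⊓ Submodule.span R {z} = ⊥ := by
  obtain ⟨z₀, hz₀K, hz₀⟩ := exists_not_nilpotent hsp hK
  obtain ⟨M, hMmem, hMmax⟩ := set_has_maximal_iff_noetherian.mpr inferInstance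
    ((fun y => lann y) '' {y | y ∈ K ∧ ¬ IsNilpotent y}) ⟨lann z₀, ⟨z₀, ⟨hz₀K, hz₀⟩, rfl⟩⟩
  obtain ⟨z, ⟨hzK, hznil⟩, rfl⟩ := hMmem
  have hz0 : z ≠ 0 := fun h => hznil (h ▸ ⟨1, by simp⟩)
  have hz2K : z * z ∈ K := by simpa [smul_eq_mul] using K.smul_mem z hzK
  have hz2nil : ¬ IsNilpotent (z * z) := by
    rintro ⟨n, hn⟩
    exact hznil ⟨2 * n, by rw [pow_mul, pow_two]; exact hn⟩
  have hle : lann z ≤ lann (z * z) := by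
    intro t ht
    rw [mem_lann] at ht ⊢
    rw [← mul_assoc, ht, zero_mul]
  have heq : lann (z * z) = lann z := by
    by_contra hne
    exact hMmax (lann (z * z)) ⟨z * z, ⟨hz2K, hz2nil⟩, rfl⟩
      (lt_of_le_of_ne hle fun h => hne h.symm)
  refine ⟨z, hzK, hz0, ?_⟩
  rw [eq_bot_iff]
  intro w hw
  obtain ⟨hw1, hw2⟩ := Submodule.mem_inf.mp hw
  obtain ⟨t, rfl⟩ := Submodule.mem_span_singleton.mp hw2
  rw [mem_lann, smul_eq_mul] at hw1
  have htz : t ∈ lann (z * z) := by rw [mem_lann, ← mul_assoc]; exact hw1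
  rw [heq, mem_lann] at htz
  simp [smul_eq_mul, htz]

lemma essential_mono {E E' : Submodule R R} (h : EssentialSubmodule E) (hle : E ≤ E') :
    EssentialSubmodule E' := by
  intro N hN hbot
  exact h N hN (le_bot_iff.mp (hbot ▸ inf_le_inf_right N hle))

lemma essential_comap (f : R →ₗ[R] R) {E : Submodule R R} (h : EssentialSubmodule E) :
    EssentialSubmodule (E.comap f) := by
  intro N hN
  by_cases hmap : Submodule.map f N = ⊥
  · have hsub : N ≤ E.comap f := by
      intro n hn
      have hfn : f n = 0 := by
        have : f n ∈ Submodule.map f N := ⟨n, hn, rfl⟩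
        rw [hmap] at this
        simpa using this
      simp [Submodule.mem_comap, hfn]
    intro hbot
    apply hN
    rw [← inf_eq_right.mpr hsub]
    exact hbot
  · have hmeet := h (Submodule.map f N) hmap
    obtain ⟨y, hy, hy0⟩ := (Submodule.ne_bot_iff _).mp hmeet
    obtain ⟨hyE, hyN⟩ := Submodule.mem_inf.mp hy
    obtain ⟨n, hnN, rfl⟩ := hyN
    intro hbot
    have hnmem : n ∈ E.comap f ⊓ N := Submodule.mem_inf.mpr ⟨hyE, hnN⟩
    rw [hbot, Submodule.mem_bot] at hnmem
    apply hy0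
    rw [hnmem, map_zero]

/-- If `b ≠ 0` then the left annihilator of `b` is not essential. -/
lemma not_essential_lann (hsp : sInf {P : Ideal R | IsPrimeTwoSidedIdeal P} = ⊥)
    {b : R} (hb : b ≠ 0) : ¬ EssentialSubmodule (lann b) := by
  intro hess
  have hKb : (Submodule.span R {b} : Submodule R R) ≠ ⊥ :=
    (Submodule.ne_bot_iff _).mpr ⟨b, Submodule.mem_span_singleton_self b, hb⟩
  obtain ⟨z, hzK, hz0, hzann⟩ := exists_good hsp hKb
  obtain ⟨t, rfl⟩ := Submodule.mem_span_singleton.mp hzK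
  have h1 : EssentialSubmodule ((lann b).comap (LinearMap.toSpanSingleton R R t)) :=
    essential_comap _ hess
  have h2 : (lann b).comap (LinearMap.toSpanSingleton R R t) ≤ lann (t • b) := by
    intro x hx
    rw [Submodule.mem_comap, mem_lann, LinearMap.toSpanSingleton_apply, smul_eq_mul] at hx
    rw [mem_lann, smul_eq_mul, ← mul_assoc]
    exact hx
  have h3 := essential_mono h1 h2
  apply h3 (Submodule.span R {t • b})
    ((Submodule.ne_bot_iff _).mpr ⟨t • b, Submodule.mem_span_singleton_self _, hz0⟩)
  exact hzann

/-- The range of an injective endomorphism of a Noetherian module is essential. -/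
lemma essential_range (f : R →ₗ[R] R) (hf : Function.Injective f) :
    EssentialSubmodule (LinearMap.range f) := by
  intro N hN hbot
  obtain ⟨x₀, hx₀N, hx₀⟩ := (Submodule.ne_bot_iff N).mp hN
  have hd : ∀ y, y ∈ LinearMap.range f → y ∈ N → y = 0 := by
    intro y h1 h2
    have : y ∈ LinearMap.range f ⊓ N := Submodule.mem_inf.mpr ⟨h1, h2⟩
    rw [hbot, Submodule.mem_bot] at this
    exact this
  let S : ℕ → Submodule R R := fun k => Nat.rec N (fun _ Sk => N ⊔ Submodule.map f Sk) k
  have hSsucc : ∀ k, S (k + 1) = N ⊔ Submodule.map f (S k) := fun k => rfl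
  have hmono : ∀ k, S k ≤ S (k + 1) := by
    intro k
    induction k with
    | zero => exact le_sup_left
    | succ k ih =>
      show N ⊔ Submodule.map f (S k) ≤ N ⊔ Submodule.map f (S (k + 1))
      exact sup_le_sup_left (Submodule.map_mono ih) N
  have hmem : ∀ k, f^[k] x₀ ∈ S k := by
    intro k
    induction k with
    | zero => exact hx₀N
    | succ k ih =>
      rw [Function.iterate_succ_apply', hSsucc]
      exact Submodule.mem_sup_right (Submodule.mem_map_of_mem ih)
  have hdesc : ∀ k y, f y ∈ S (k + 1) → y ∈ S k := by
    intro k y hy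
    rw [hSsucc] at hy
    obtain ⟨x, hxN, w, hw, hsum⟩ := Submodule.mem_sup.mp hy
    obtain ⟨s, hs, rfl⟩ := hw
    have hx0 : x = 0 := by
      apply hd x ?_ hxN
      exact ⟨y - s, by rw [map_sub]; exact (eq_sub_of_add_eq hsum).symm⟩
    have hfy : f y = f s := by rw [← hsum, hx0, zero_add]
    rw [hf hfy]
    exact hs
  have hnot : ∀ k, f^[k + 1] x₀ ∉ S k := by
    intro k
    induction k with
    | zero =>
      intro h
      apply hx₀
      apply hf
      rw [map_zero]
      exact hd (f x₀) ⟨x₀, rfl⟩ (show f x₀ ∈ N from h)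
    | succ k ih =>
      intro h
      rw [Function.iterate_succ_apply'] at h
      exact ih (hdesc _ _ h)
  obtain ⟨n, hn⟩ := monotone_stabilizes_iff_noetherian.mpr inferInstance
    ⟨S, monotone_nat_of_le_succ hmono⟩
  have hst : S n = S (n + 1) := hn (n + 1) (by omega)
  have := hmem (n + 1)
  rw [← hst] at this
  exact hnot n this

lemma list_sum_mul_zero {L : List R} {y : R} (h : ∀ b ∈ L, b * y = 0) : L.sum * y = 0 := by
  induction L with
  | nil => simp
  | cons a L ih =>
    rw [List.sum_cons, add_mul, h a (List.mem_cons_self),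
      ih (fun b hb => h b (List.mem_cons_of_mem a hb)), add_zero]

lemma span_mul_right_zero {s : Set R} {y : R} (h : ∀ u ∈ s, u * y = 0) :
    ∀ w ∈ Submodule.span R s, w * y = 0 := by
  intro w hw
  induction hw using Submodule.span_induction with
  | mem u hu => exact h u hu
  | zero => rw [zero_mul]
  | add u v _ _ ihu ihv => rw [add_mul, ihu, ihv, add_zero]
  | smul r u _ ihu => rw [smul_eq_mul, mul_assoc, ihu, mul_zero]

lemma sum_lemma : ∀ L : List R, L.Pairwise (fun a b => b * a = 0) →
    (∀ y ∈ L, lann y ⊓ Submodule.span R {y} = ⊥) →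
    ∀ t : R, t * L.sum = 0 → ∀ y ∈ L, t * y = 0 := by
  intro L
  induction L with
  | nil => intro _ _ t _ y hy; simp at hy
  | cons y L ih =>
    intro hpair hann t ht u hu
    rw [List.pairwise_cons] at hpair
    obtain ⟨hhead, htail⟩ := hpair
    rw [List.sum_cons] at ht
    have hsy : L.sum * y = 0 := list_sum_mul_zero hhead
    have hty : t * y = 0 := by
      have h0 : t * (y + L.sum) * y = 0 := by rw [ht, zero_mul]
      have e : t * (y + L.sum) * y = t * y * y + t * (L.sum * y) := by
        rw [mul_add, add_mul, mul_assoc t L.sum y]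
      rw [e, hsy, mul_zero, add_zero] at h0
      have hm : t * y ∈ lann y ⊓ Submodule.span R {y} :=
        Submodule.mem_inf.mpr ⟨h0, Submodule.mem_span_singleton.mpr ⟨t, by rw [smul_eq_mul]⟩⟩
      rw [hann y (List.mem_cons_self), Submodule.mem_bot] at hm
      exact hm
    rcases List.mem_cons.mp hu with h | h
    · rw [h]; exact hty
    · have ht' : t * L.sum = 0 := by
        have := ht
        rw [mul_add, hty, zero_add] at this
        exact this
      exact ih htail (fun v hv => hann v (List.mem_cons_of_mem y hv)) t ht' u h

lemma ind_lemma : ∀ L : List R, L.Pairwise (fun a b => b * a = 0) →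
    (∀ y ∈ L, lann y ⊓ Submodule.span R {y} = ⊥) →
    ∀ z : R, (∀ y ∈ L, z * y = 0) → z ∈ Submodule.span R {x | x ∈ L} → z = 0 := by
  intro L
  induction L with
  | nil =>
    intro _ _ z _ hz
    have hset : {x : R | x ∈ ([] : List R)} = (∅ : Set R) := by ext u; simp
    rw [hset, Submodule.span_empty, Submodule.mem_bot] at hz
    exact hz
  | cons y L ih =>
    intro hpair hann z hz hzspan
    rw [List.pairwise_cons] at hpair
    obtain ⟨hhead, htail⟩ := hpair
    have hset : {x : R | x ∈ y :: L} = insert y {x : R | x ∈ L} := by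
      ext u; simp [List.mem_cons]
    rw [hset] at hzspan
    obtain ⟨t, w, hw, rfl⟩ := Submodule.mem_span_insert.mp hzspan
    have hwy : w * y = 0 := span_mul_right_zero hhead w hw
    have hzy : (t • y + w) * y = 0 := hz y (List.mem_cons_self)
    have hty : t * y = 0 := by
      rw [add_mul, smul_eq_mul, hwy, add_zero] at hzy
      have hm : t * y ∈ lann y ⊓ Submodule.span R {y} :=
        Submodule.mem_inf.mpr ⟨hzy, Submodule.mem_span_singleton.mpr ⟨t, by rw [smul_eq_mul]⟩⟩
      rw [hann y (List.mem_cons_self), Submodule.mem_bot] at hm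
      exact hm
    have hzw : t • y + w = w := by rw [smul_eq_mul, hty, zero_add]
    rw [hzw]
    exact ih htail (fun u hu => hann u (List.mem_cons_of_mem y hu)) w
      (fun u hu => by
        have h2 := hz u (List.mem_cons_of_mem y hu)
        rw [hzw] at h2
        exact h2) hw

/-- An essential left ideal contains an element with zero left annihilator. -/
lemma exists_lann_bot (hsp : sInf {P : Ideal R | IsPrimeTwoSidedIdeal P} = ⊥)
    {I : Ideal R} (hI : EssentialSubmodule I) :
    ∃ a ∈ I, lann a = ⊥ := by
  have wf : WellFounded ((· > ·) : Submodule R R → Submodule R R → Prop) :=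
    isNoetherian_iff.mp inferInstance
  let C : Submodule R R → Prop := fun P => ∀ L : List R,
      Submodule.span R {x | x ∈ L} = P → (∀ y ∈ L, y ∈ I) →
      (∀ y ∈ L, lann y ⊓ Submodule.span R {y} = ⊥) →
      L.Pairwise (fun a b => b * a = 0) → ∃ a ∈ I, lann a = ⊥
  have key : ∀ P, C P := by
    intro P
    refine wf.induction (C := C) P ?_
    intro P IH L hspan hmemI hann hpair
    set J : Submodule R R :=
      { carrier := {t | ∀ y ∈ L, t * y = 0}
        add_mem' := by
          intro s t hs ht y hy
          rw [add_mul, hs y hy, ht y hy, add_zero]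
        zero_mem' := by intro y hy; rw [zero_mul]
        smul_mem' := by
          intro r t ht y hy
          rw [smul_eq_mul, mul_assoc, ht y hy, mul_zero] } with hJdef
    by_cases hJ : J = ⊥
    · refine ⟨L.sum, list_sum_mem hmemI, ?_⟩
      rw [eq_bot_iff]
      intro t ht
      have htJ : t ∈ J := fun y hy => sum_lemma L hpair hann t ht y hy
      rw [hJ] at htJ
      exact htJ
    · have hIJ : I ⊓ J ≠ ⊥ := hI J hJ
      obtain ⟨z, hzIJ, hz0, hzann⟩ := exists_good hsp hIJ
      obtain ⟨hzI, hzJ⟩ := Submodule.mem_inf.mp hzIJ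
      have hzP : z ∉ P := by
        intro hzP
        rw [← hspan] at hzP
        exact hz0 (ind_lemma L hpair hann z (fun y hy => hzJ y hy) hzP)
      have hPP' : P < Submodule.span R {x | x ∈ L ++ [z]} := by
        have hle : P ≤ Submodule.span R {x | x ∈ L ++ [z]} := by
          rw [← hspan]
          apply Submodule.span_mono
          intro u hu
          exact List.mem_append_left _ hu
        have hzP' : z ∈ Submodule.span R {x | x ∈ L ++ [z]} :=
          Submodule.subset_span (List.mem_append_right _ (List.mem_singleton_self z))
        exact lt_of_le_of_ne hle (fun h => hzP (by rw [h]; exact hzP'))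
      refine IH _ hPP' (L ++ [z]) rfl ?_ ?_ ?_
      · intro y hy
        rcases List.mem_append.mp hy with h | h
        · exact hmemI y h
        · rw [List.mem_singleton] at h
          rw [h]; exact hzI
      · intro y hy
        rcases List.mem_append.mp hy with h | h
        · exact hann y h
        · rw [List.mem_singleton] at h
          rw [h]; exact hzann
      · refine List.pairwise_append.mpr ⟨hpair, List.pairwise_singleton _ _, ?_⟩
        intro a ha b hb
        rw [List.mem_singleton] at hb
        rw [hb]
        exact hzJ a ha
  exact key (Submodule.span R {x | x ∈ ([] : List R)}) [] rfl (by simp) (by simp)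
    List.Pairwise.nil


end GoldieAux

/-- Goldie's regular element lemma: in a semiprime Noetherian ring, every essential
ideal contains a regular element. -/
theorem goldie_regular_element (R : Type*) [Ring R] [Nontrivial R] [IsNoetherianRing R]
    (hsp : sInf {P : Ideal R | IsPrimeTwoSidedIdeal P} = ⊥)
    (I : Ideal R) (hI : EssentialSubmodule I) :
    ∃ a ∈ I, IsRegularElem a := by
  obtain ⟨a, haI, hla⟩ := exists_lann_bot hsp hI
  have ha0 : a ≠ 0 := by
    intro h
    have h1 : (1 : R) ∈ lann a := by rw [mem_lann, h, mul_zero]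
    rw [hla, Submodule.mem_bot] at h1
    exact one_ne_zero h1
  refine ⟨a, haI, ha0, fun b hb => ⟨?_, ?_⟩⟩
  · intro hab
    have hker : LinearMap.ker (LinearMap.toSpanSingleton R R a) = ⊥ := by
      rw [eq_bot_iff]
      intro x hx
      rw [LinearMap.mem_ker, LinearMap.toSpanSingleton_apply, smul_eq_mul] at hx
      have hxl : x ∈ lann a := hx
      rw [hla] at hxl
      exact hxl
    have hinj : Function.Injective (LinearMap.toSpanSingleton R R a) :=
      LinearMap.ker_eq_bot.mp hker
    have hle : LinearMap.range (LinearMap.toSpanSingleton R R a) ≤ lann b := by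
      rintro x ⟨t, rfl⟩
      rw [mem_lann, LinearMap.toSpanSingleton_apply, smul_eq_mul, mul_assoc, hab, mul_zero]
    exact not_essential_lann hsp hb (essential_mono (essential_range _ hinj) hle)
  · intro hba
    have hbl : b ∈ lann a := hba
    rw [hla, Submodule.mem_bot] at hbl
    exact hb hbl
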